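/- Let f : ℝⁿ → ℝ be a three times continuously differentiable convex function that is M-self-concordant (M > 0). Then for all x, d ∈ ℝⁿ and all t ≥ 0: (i) ∇f(x+td)ᵀd ≥ ∇f(x)ᵀd + t‖d‖ₓ²/(1 + Mt‖d‖ₓ) and (ii) f(x+td) ≥ f(x) + t∇f(x)ᵀd + ω(Mt‖d‖ₓ)/M²; moreover, for all t ≥ 0 with Mt‖d‖ₓ < 1: (iii) ∇f(x+td)ᵀd ≤ ∇f(x)ᵀd + t‖d‖ₓ²/(1 − Mt‖d‖ₓ) and (iv) f(x+td) ≤ f(x) + t∇f(x)ᵀd + ω*(Mt‖d‖ₓ)/M². -/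

import Mathlib

noncomputable section

open scoped BigOperators Classical

/-- Vectors in `ℝⁿ` with the Euclidean norm. -/
abbrev V (n : ℕ) := EuclideanSpace ℝ (Fin n)

/-- The Euclidean dot product `uᵀv`. -/
def dot {n : ℕ} (u v : V n) : ℝ := ∑ i, u i * v i

/-- The Hessian quadratic form `dᵀ∇²f(x)d`. -/
def hessQ {n : ℕ} (f : V n → ℝ) (x d : V n) : ℝ := iteratedFDeriv ℝ 2 f x ![d, d]

/-- The weighted norm `‖d‖ₓ = (dᵀ∇²f(x)d)^{1/2}`. -/
def wnorm {n : ℕ} (f : V n → ℝ) (x d : V n) : ℝ := Real.sqrt (hessQ f x d)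

/-- `f` is `μ`-strongly convex. -/
def StrongConvex {n : ℕ} (μ : ℝ) (f : V n → ℝ) : Prop :=
  ∀ x y : V n, ∀ l : ℝ, 0 ≤ l → l ≤ 1 →
    f (l • x + (1 - l) • y) ≤ l * f x + (1 - l) * f y - l * (1 - l) * μ / 2 * ‖x - y‖ ^ 2

/-- `f` has `L`-Lipschitz continuous gradient. -/
def LipschitzGrad {n : ℕ} (L : ℝ) (f : V n → ℝ) : Prop :=
  ∀ x y : V n, ‖gradient f x - gradient f y‖ ≤ L * ‖x - y‖

/-- `f` is `M`-self-concordant: `|D³f(x)[d,d,d]| ≤ 2M (dᵀ∇²f(x)d)^{3/2}`. -/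
def SelfConcordant {n : ℕ} (M : ℝ) (f : V n → ℝ) : Prop :=
  ∀ x d : V n, |iteratedFDeriv ℝ 3 f x ![d, d, d]| ≤ 2 * M * hessQ f x d ^ ((3 : ℝ) / 2)

/-- `f` has `L₂`-Lipschitz continuous Hessian. -/
def LipschitzHessian {n : ℕ} (L₂ : ℝ) (f : V n → ℝ) : Prop :=
  ∀ x y : V n, ‖iteratedFDeriv ℝ 2 f x - iteratedFDeriv ℝ 2 f y‖ ≤ L₂ * ‖x - y‖

/-- `ω(z) = z - ln(1+z)`. -/
def omegaFn (z : ℝ) : ℝ := z - Real.log (1 + z)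

/-- `ω⋆(z) = -z - ln(1-z)`. -/
def omegaStar (z : ℝ) : ℝ := -z - Real.log (1 - z)

/-- Matrix–vector multiplication acting on Euclidean space. -/
def mulv {n : ℕ} (A : Matrix (Fin n) (Fin n) ℝ) (v : V n) : V n :=
  (EuclideanSpace.equiv (Fin n) ℝ).symm (A.mulVec (EuclideanSpace.equiv (Fin n) ℝ v))

/-- `g_k = ∇f(x_k)`. -/
def gvec {n : ℕ} (f : V n → ℝ) (x : ℕ → V n) (k : ℕ) : V n := gradient f (x k)

/-- `d_k = -B_k⁻¹ g_k`. -/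
def dvec {n : ℕ} (f : V n → ℝ) (x : ℕ → V n) (B : ℕ → Matrix (Fin n) (Fin n) ℝ) (k : ℕ) : V n :=
  -(mulv (B k)⁻¹ (gvec f x k))

/-- `η_k = -g_kᵀd_k / ‖d_k‖_{x_k}`. -/
def etaSeq {n : ℕ} (f : V n → ℝ) (x : ℕ → V n) (B : ℕ → Matrix (Fin n) (Fin n) ℝ) (k : ℕ) : ℝ :=
  -(dot (gvec f x k) (dvec f x B k)) / wnorm f (x k) (dvec f x B k)

/-- The adaptive step size `t_k = η_k / ((1 + M η_k) ‖d_k‖_{x_k})`. -/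
def tSeq {n : ℕ} (f : V n → ℝ) (M : ℝ) (x : ℕ → V n) (B : ℕ → Matrix (Fin n) (Fin n) ℝ)
    (k : ℕ) : ℝ :=
  etaSeq f x B k / ((1 + M * etaSeq f x B k) * wnorm f (x k) (dvec f x B k))

/-- `s_k = x_{k+1} - x_k`. -/
def svec {n : ℕ} (x : ℕ → V n) (k : ℕ) : V n := x (k + 1) - x k

/-- `y_k = g_{k+1} - g_k`. -/
def yvec {n : ℕ} (f : V n → ℝ) (x : ℕ → V n) (k : ℕ) : V n := gvec f x (k + 1) - gvec f x k

/-- The outer product `u vᵀ`. -/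
def outer {n : ℕ} (u v : V n) : Matrix (Fin n) (Fin n) ℝ := Matrix.of fun i j => u i * v j

/-- The adaptive BFGS method (Algorithm 1). -/
structure AdaptiveBFGS {n : ℕ} (f : V n → ℝ) (M : ℝ) (x : ℕ → V n)
    (B : ℕ → Matrix (Fin n) (Fin n) ℝ) : Prop where
  posdef : (B 0).PosDef
  step : ∀ k, x (k + 1) = x k + tSeq f M x B k • dvec f x B k
  update : ∀ k, B (k + 1) =
    B k - (dot (svec x k) (mulv (B k) (svec x k)))⁻¹ • (B k * outer (svec x k) (svec x k) * B k)
      + (dot (yvec f x k) (svec x k))⁻¹ • outer (yvec f x k) (yvec f x k)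

/-- `α_k = ‖d_k‖_{x_k} / (√L ‖d_k‖)`. -/
def alphaSeq {n : ℕ} (f : V n → ℝ) (L : ℝ) (x : ℕ → V n) (B : ℕ → Matrix (Fin n) (Fin n) ℝ)
    (k : ℕ) : ℝ :=
  wnorm f (x k) (dvec f x B k) / (Real.sqrt L * ‖dvec f x B k‖)

/-- The smoothness aided adaptive step size `t̃_k`. -/
def ttSeq {n : ℕ} (f : V n → ℝ) (M L : ℝ) (x : ℕ → V n) (B : ℕ → Matrix (Fin n) (Fin n) ℝ)
    (k : ℕ) : ℝ :=
  if (1 + M * etaSeq f x B k) * alphaSeq f L x B k ≤ 1 then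
    etaSeq f x B k / ((1 + M * etaSeq f x B k) * wnorm f (x k) (dvec f x B k))
  else
    (M * etaSeq f x B k * alphaSeq f L x B k ^ 2 + (1 - alphaSeq f L x B k) ^ 2)
      / (M * wnorm f (x k) (dvec f x B k))

/-- The smoothness aided adaptive BFGS method SA²-BFGS (Algorithm 3). -/
structure SA2BFGS {n : ℕ} (f : V n → ℝ) (M L : ℝ) (x : ℕ → V n)
    (B : ℕ → Matrix (Fin n) (Fin n) ℝ) : Prop where
  posdef : (B 0).PosDef
  step : ∀ k, x (k + 1) = x k + ttSeq f M L x B k • dvec f x B k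
  update : ∀ k, B (k + 1) =
    B k - (dot (svec x k) (mulv (B k) (svec x k)))⁻¹ • (B k * outer (svec x k) (svec x k) * B k)
      + (dot (yvec f x k) (svec x k))⁻¹ • outer (yvec f x k) (yvec f x k)

/-- The positive semidefinite square root of a positive semidefinite matrix
(the definition of `Matrix.PosSemidef.sqrt` in the older Mathlib, since removed). -/
def psdSqrt {m : Type*} [Fintype m] [DecidableEq m] {A : Matrix m m ℝ} (hA : A.PosSemidef) :
    Matrix m m ℝ :=
  hA.1.eigenvectorUnitary.1 * Matrix.diagonal ((↑) ∘ (√·) ∘ hA.1.eigenvalues) *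
    (star hA.1.eigenvectorUnitary : Matrix m m ℝ)

/-- `ĝ_k = P^{-1/2} g_k`. -/
def hatg {n : ℕ} (f : V n → ℝ) (x : ℕ → V n) (P : Matrix (Fin n) (Fin n) ℝ) (hP : P.PosDef)
    (k : ℕ) : V n :=
  mulv (psdSqrt hP.posSemidef)⁻¹ (gvec f x k)

/-- `ŝ_k = P^{1/2} s_k`. -/
def hats {n : ℕ} (x : ℕ → V n) (P : Matrix (Fin n) (Fin n) ℝ) (hP : P.PosDef) (k : ℕ) : V n :=
  mulv (psdSqrt hP.posSemidef) (svec x k)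

/-- `ŷ_k = P^{-1/2} y_k`. -/
def haty {n : ℕ} (f : V n → ℝ) (x : ℕ → V n) (P : Matrix (Fin n) (Fin n) ℝ) (hP : P.PosDef)
    (k : ℕ) : V n :=
  mulv (psdSqrt hP.posSemidef)⁻¹ (yvec f x k)

/-- `cos θ̂_k = -ĝ_kᵀŝ_k / (‖ĝ_k‖ ‖ŝ_k‖)`. -/
def cosθ {n : ℕ} (f : V n → ℝ) (x : ℕ → V n) (P : Matrix (Fin n) (Fin n) ℝ) (hP : P.PosDef)
    (k : ℕ) : ℝ :=
  -(dot (hatg f x P hP k) (hats x P hP k)) / (‖hatg f x P hP k‖ * ‖hats x P hP k‖)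

/-- `m̂_k = ŷ_kᵀŝ_k / ‖ŝ_k‖²`. -/
def mhat {n : ℕ} (f : V n → ℝ) (x : ℕ → V n) (P : Matrix (Fin n) (Fin n) ℝ) (hP : P.PosDef)
    (k : ℕ) : ℝ :=
  dot (haty f x P hP k) (hats x P hP k) / ‖hats x P hP k‖ ^ 2

/-- `q̂_k = ‖ĝ_k‖² / (f(x_k) - f(x*))`. -/
def qhat {n : ℕ} (f : V n → ℝ) (x : ℕ → V n) (xstar : V n) (P : Matrix (Fin n) (Fin n) ℝ)
    (hP : P.PosDef) (k : ℕ) : ℝ :=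
  ‖hatg f x P hP k‖ ^ 2 / (f (x k) - f xstar)

/-- The potential function `Ψ(A) = tr(A) - ln det(A) - n`. -/
def Psi {n : ℕ} (A : Matrix (Fin n) (Fin n) ℝ) : ℝ := A.trace - Real.log A.det - n

/-- The Hessian matrix `∇²f(x)` in the standard basis. -/
def hessMatrix {n : ℕ} (f : V n → ℝ) (x : V n) : Matrix (Fin n) (Fin n) ℝ :=
  Matrix.of fun i j =>
    iteratedFDeriv ℝ 2 f x ![EuclideanSpace.single i (1 : ℝ), EuclideanSpace.single j (1 : ℝ)]

/- ===== Auxiliary lemmas for stmt0 ===== -/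

section AuxSC

open Set

private lemma rpow_threeHalves {x : ℝ} (hx : 0 ≤ x) :
    x ^ ((3:ℝ)/2) = x * Real.sqrt x := by
  rw [show (3:ℝ)/2 = (1/2:ℝ)*3 by norm_num, Real.rpow_mul hx, ← Real.sqrt_eq_rpow,
    show (3:ℝ) = ((3:ℕ):ℝ) by norm_num, Real.rpow_natCast]
  calc Real.sqrt x ^ 3 = (Real.sqrt x * Real.sqrt x) * Real.sqrt x := by ring
    _ = x * Real.sqrt x := by rw [Real.mul_self_sqrt hx]

private lemma nonneg_of_deriv {g g' : ℝ → ℝ} {t : ℝ} (ht : 0 ≤ t)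
    (hg : ∀ s ∈ Set.Icc (0:ℝ) t, HasDerivAt g (g' s) s)
    (h0 : g 0 = 0) (hd : ∀ s ∈ Set.Icc (0:ℝ) t, 0 ≤ g' s) : 0 ≤ g t := by
  have hmono : MonotoneOn g (Set.Icc (0:ℝ) t) :=
    monotoneOn_of_deriv_nonneg (convex_Icc 0 t)
      (fun s hs => ((hg s hs).continuousAt).continuousWithinAt)
      (fun s hs => ((hg s (interior_subset hs)).differentiableAt).differentiableWithinAt)
      (fun s hs => by rw [(hg s (interior_subset hs)).deriv]; exact hd s (interior_subset hs))
  have h := hmono (left_mem_Icc.2 ht) (right_mem_Icc.2 ht) ht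
  linarith

section OneD

variable {M : ℝ} {φ φ1 u w : ℝ → ℝ}

private lemma psi_hasDeriv (h3 : ∀ s, HasDerivAt u (w s) s) {s : ℝ} (hs : 0 < u s) :
    HasDerivAt (fun r => (Real.sqrt (u r))⁻¹)
      (-(1/(2*Real.sqrt (u s)) * w s) / (Real.sqrt (u s))^2) s := by
  have h1 : HasDerivAt (fun r => Real.sqrt (u r)) (1/(2*Real.sqrt (u s)) * w s) s :=
    (Real.hasDerivAt_sqrt (ne_of_gt hs)).comp s (h3 s)
  exact h1.inv (Real.sqrt_ne_zero'.2 hs)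

private lemma psi_deriv_bound (hM : 0 < M)
    (hsc : ∀ s, |w s| ≤ 2*M*(u s)^((3:ℝ)/2)) {s : ℝ} (hs : 0 < u s) :
    |(-(1/(2*Real.sqrt (u s)) * w s) / (Real.sqrt (u s))^2)| ≤ M := by
  have hq : 0 < Real.sqrt (u s) := Real.sqrt_pos.2 hs
  have hq2 : Real.sqrt (u s)^2 = u s := Real.sq_sqrt hs.le
  have hb : |w s| ≤ 2*M*(Real.sqrt (u s)^2*Real.sqrt (u s)) := by
    calc |w s| ≤ 2*M*(u s)^((3:ℝ)/2) := hsc s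
      _ = 2*M*(Real.sqrt (u s)^2*Real.sqrt (u s)) := by
          rw [rpow_threeHalves hs.le, hq2]
  have he : |(-(1/(2*Real.sqrt (u s)) * w s) / (Real.sqrt (u s))^2)|
      = 1/(2*Real.sqrt (u s)) * |w s| / (Real.sqrt (u s))^2 := by
    rw [abs_div, abs_neg, abs_mul, abs_of_pos (by positivity : (0:ℝ) < 1/(2*Real.sqrt (u s))),
      abs_of_pos (by positivity : (0:ℝ) < Real.sqrt (u s)^2)]
  rw [he, div_le_iff₀ (by positivity)]
  have h2 := mul_le_mul_of_nonneg_left hb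
    (by positivity : (0:ℝ) ≤ 1/(2*Real.sqrt (u s)))
  have h3 : 1/(2*Real.sqrt (u s))*(2*M*(Real.sqrt (u s)^2*Real.sqrt (u s)))
      = M * Real.sqrt (u s)^2 := by
    field_simp
  linarith

private lemma psi_bounds (hM : 0 < M)
    (h3 : ∀ s, HasDerivAt u (w s) s)
    (hsc : ∀ s, |w s| ≤ 2*M*(u s)^((3:ℝ)/2))
    {t : ℝ} (ht : 0 ≤ t) (hpos : ∀ s ∈ Set.Icc (0:ℝ) t, 0 < u s) :
    (Real.sqrt (u 0))⁻¹ - M*t ≤ (Real.sqrt (u t))⁻¹ ∧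
      (Real.sqrt (u t))⁻¹ ≤ (Real.sqrt (u 0))⁻¹ + M*t := by
  constructor
  · have h := nonneg_of_deriv (g := fun r => M*r + (Real.sqrt (u r))⁻¹ - (Real.sqrt (u 0))⁻¹)
      (g' := fun s => M + (-(1/(2*Real.sqrt (u s)) * w s) / (Real.sqrt (u s))^2)) ht
      (fun s hs => by
        simpa using (((hasDerivAt_id s).const_mul M).add (psi_hasDeriv h3 (hpos s hs))).sub_const
          ((Real.sqrt (u 0))⁻¹))
      (by simp)
      (fun s hs => by
        have hb := abs_le.1 (psi_deriv_bound hM hsc (hpos s hs))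
        beta_reduce
        linarith [hb.1])
    beta_reduce at h
    linarith
  · have h := nonneg_of_deriv (g := fun r => M*r - (Real.sqrt (u r))⁻¹ + (Real.sqrt (u 0))⁻¹)
      (g' := fun s => M - (-(1/(2*Real.sqrt (u s)) * w s) / (Real.sqrt (u s))^2)) ht
      (fun s hs => by
        simpa using (((hasDerivAt_id s).const_mul M).sub (psi_hasDeriv h3 (hpos s hs))).add_const
          ((Real.sqrt (u 0))⁻¹))
      (by simp)
      (fun s hs => by
        have hb := abs_le.1 (psi_deriv_bound hM hsc (hpos s hs))
        beta_reduce
        linarith [hb.2])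
    beta_reduce at h
    linarith

private lemma u_pos (hM : 0 < M)
    (h3 : ∀ s, HasDerivAt u (w s) s) (hu0 : ∀ s, 0 ≤ u s)
    (hsc : ∀ s, |w s| ≤ 2*M*(u s)^((3:ℝ)/2))
    (h0 : 0 < u 0) {t : ℝ} (ht : 0 ≤ t) : 0 < u t := by
  by_contra hc
  have hut : u t = 0 := le_antisymm (not_lt.1 hc) (hu0 t)
  have hucont : Continuous u := by
    rw [continuous_iff_continuousAt]; exact fun s => (h3 s).continuousAt
  have hSclosed : IsClosed {s : ℝ | s ∈ Set.Icc (0:ℝ) t ∧ u s = 0} := by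
    have hset : {s : ℝ | s ∈ Set.Icc (0:ℝ) t ∧ u s = 0} = Set.Icc (0:ℝ) t ∩ u ⁻¹' {0} := by
      ext s; simp [Set.mem_inter_iff]
    rw [hset]
    exact isClosed_Icc.inter (isClosed_singleton.preimage hucont)
  have hSne : {s : ℝ | s ∈ Set.Icc (0:ℝ) t ∧ u s = 0}.Nonempty := ⟨t, ⟨⟨ht, le_refl t⟩, hut⟩⟩
  have hSbdd : BddBelow {s : ℝ | s ∈ Set.Icc (0:ℝ) t ∧ u s = 0} := ⟨0, fun s hs => hs.1.1⟩
  set t₁ := sInf {s : ℝ | s ∈ Set.Icc (0:ℝ) t ∧ u s = 0} with ht₁def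
  have ht₁S : t₁ ∈ {s : ℝ | s ∈ Set.Icc (0:ℝ) t ∧ u s = 0} := hSclosed.csInf_mem hSne hSbdd
  have ht₁pos : 0 < t₁ := by
    rcases (ht₁S.1.1).lt_or_eq with h | h
    · exact h
    · exfalso; rw [← h] at ht₁S; exact (ne_of_gt h0) ht₁S.2
  have hposIco : ∀ s ∈ Set.Ico (0:ℝ) t₁, 0 < u s := by
    intro s hs
    rcases (hu0 s).lt_or_eq with h | h
    · exact h
    · exfalso
      have hmem : s ∈ {s : ℝ | s ∈ Set.Icc (0:ℝ) t ∧ u s = 0} :=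
        ⟨⟨hs.1, hs.2.le.trans ht₁S.1.2⟩, h.symm⟩
      exact absurd (csInf_le hSbdd hmem) (not_le.2 hs.2)
  have hBpos : 0 < (Real.sqrt (u 0))⁻¹ + M * t₁ := by
    have h1 : 0 < (Real.sqrt (u 0))⁻¹ := inv_pos.2 (Real.sqrt_pos.2 h0)
    have h2 : 0 < M * t₁ := mul_pos hM ht₁pos
    linarith
  have hεbound : ∀ s ∈ Set.Ico (0:ℝ) t₁, (((Real.sqrt (u 0))⁻¹ + M * t₁)^2)⁻¹ ≤ u s := by
    intro s hs
    have hq : 0 < Real.sqrt (u s) := Real.sqrt_pos.2 (hposIco s hs)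
    have hq2 : Real.sqrt (u s)^2 = u s := Real.sq_sqrt (hposIco s hs).le
    have hψ := (psi_bounds hM h3 hsc hs.1
      (fun r hr => hposIco r ⟨hr.1, lt_of_le_of_lt hr.2 hs.2⟩)).2
    have hle : (Real.sqrt (u s))⁻¹ ≤ (Real.sqrt (u 0))⁻¹ + M * t₁ := by
      have hms : M * s ≤ M * t₁ := mul_le_mul_of_nonneg_left hs.2.le hM.le
      linarith
    have h1 : 1 ≤ ((Real.sqrt (u 0))⁻¹ + M * t₁) * Real.sqrt (u s) := by
      have h2 := mul_le_mul_of_nonneg_right hle hq.le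
      rwa [inv_mul_cancel₀ hq.ne'] at h2
    have hrw : (((Real.sqrt (u 0))⁻¹ + M * t₁)^2)⁻¹
        = 1 / ((Real.sqrt (u 0))⁻¹ + M * t₁)^2 := (one_div _).symm
    rw [hrw, div_le_iff₀ (pow_pos hBpos 2)]
    nlinarith [h1, hq2, hBpos.le, hq.le]
  have hclosure : t₁ ∈ closure (Set.Ico (0:ℝ) t₁) := by
    rw [closure_Ico (ne_of_lt ht₁pos)]
    exact ⟨ht₁pos.le, le_refl t₁⟩
  have hnebot : (nhdsWithin t₁ (Set.Ico (0:ℝ) t₁)).NeBot :=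
    mem_closure_iff_nhdsWithin_neBot.1 hclosure
  have htend : Filter.Tendsto u (nhdsWithin t₁ (Set.Ico (0:ℝ) t₁)) (nhds (u t₁)) :=
    (hucont.continuousAt).continuousWithinAt
  have hfin : (((Real.sqrt (u 0))⁻¹ + M * t₁)^2)⁻¹ ≤ u t₁ :=
    ge_of_tendsto htend (Filter.eventually_of_mem self_mem_nhdsWithin hεbound)
  rw [ht₁S.2] at hfin
  have hp : (0:ℝ) < (((Real.sqrt (u 0))⁻¹ + M * t₁)^2)⁻¹ := inv_pos.2 (pow_pos hBpos 2)
  linarith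

private lemma u_zero (hM : 0 < M)
    (h3 : ∀ s, HasDerivAt u (w s) s) (hu0 : ∀ s, 0 ≤ u s)
    (hsc : ∀ s, |w s| ≤ 2*M*(u s)^((3:ℝ)/2))
    (h0 : u 0 = 0) {t : ℝ} (ht : 0 ≤ t) : u t = 0 := by
  have hucont : Continuous u := by
    rw [continuous_iff_continuousAt]; exact fun s => (h3 s).continuousAt
  obtain ⟨m, hmIcc, hm⟩ := isCompact_Icc.exists_isMaxOn (Set.nonempty_Icc.2 ht)
    hucont.continuousOn
  have hbound : ∀ s ∈ Set.Ico (0:ℝ) t, ‖w s‖ ≤ (2*M*Real.sqrt (u m)) * ‖u s‖ + 0 := by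
    intro s hs
    rw [add_zero, Real.norm_eq_abs, Real.norm_eq_abs, abs_of_nonneg (hu0 s)]
    have hsq : Real.sqrt (u s) ≤ Real.sqrt (u m) := Real.sqrt_le_sqrt (hm ⟨hs.1, hs.2.le⟩)
    calc |w s| ≤ 2*M*(u s)^((3:ℝ)/2) := hsc s
      _ = 2*M*Real.sqrt (u s) * u s := by rw [rpow_threeHalves (hu0 s)]; ring
      _ ≤ 2*M*Real.sqrt (u m) * u s := by
          have hp : 0 ≤ 2*M*((Real.sqrt (u m) - Real.sqrt (u s))*u s) :=
            mul_nonneg (mul_nonneg (by norm_num) hM.le)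
              (mul_nonneg (sub_nonneg.2 hsq) (hu0 s))
          nlinarith [hp]
      _ = (2*M*Real.sqrt (u m)) * u s := rfl
  have hgr := norm_le_gronwallBound_of_norm_deriv_right_le (δ := 0) hucont.continuousOn
    (fun s _ => (h3 s).hasDerivWithinAt) (by simp [h0]) hbound t (right_mem_Icc.2 ht)
  rw [gronwallBound_ε0_δ0] at hgr
  have habs : |u t| ≤ 0 := by simpa [Real.norm_eq_abs] using hgr
  exact le_antisymm (le_trans (le_abs_self _) habs) (hu0 t)

private lemma hess_lower (hM : 0 < M)
    (h3 : ∀ s, HasDerivAt u (w s) s) (hu0 : ∀ s, 0 ≤ u s)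
    (hsc : ∀ s, |w s| ≤ 2*M*(u s)^((3:ℝ)/2))
    {t : ℝ} (ht : 0 ≤ t) :
    Real.sqrt (u 0)^2 / (1 + M*t*Real.sqrt (u 0))^2 ≤ u t := by
  rcases (hu0 0).lt_or_eq with h0 | h0
  · have hut : 0 < u t := u_pos hM h3 hu0 hsc h0 ht
    have hψ := (psi_bounds hM h3 hsc ht
      (fun s hs => u_pos hM h3 hu0 hsc h0 hs.1)).2
    have ha : 0 < Real.sqrt (u 0) := Real.sqrt_pos.2 h0
    have hq : 0 < Real.sqrt (u t) := Real.sqrt_pos.2 hut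
    have hq2 : Real.sqrt (u t)^2 = u t := Real.sq_sqrt (hu0 t)
    have hden : 0 < 1 + M*t*Real.sqrt (u 0) := by
      have := mul_nonneg (mul_nonneg hM.le ht) ha.le
      linarith
    have h1 : 1 ≤ Real.sqrt (u t) * ((Real.sqrt (u 0))⁻¹ + M*t) := by
      have h2 := mul_le_mul_of_nonneg_left hψ hq.le
      rwa [mul_inv_cancel₀ hq.ne'] at h2
    have key : Real.sqrt (u 0) ≤ Real.sqrt (u t) * (1 + M*t*Real.sqrt (u 0)) := by
      have h2 := mul_le_mul_of_nonneg_right h1 ha.le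
      have h3' : Real.sqrt (u t) * ((Real.sqrt (u 0))⁻¹ + M*t) * Real.sqrt (u 0)
          = Real.sqrt (u t) * (1 + M*t*Real.sqrt (u 0)) := by
        field_simp
      rw [h3'] at h2
      linarith
    rw [div_le_iff₀ (pow_pos hden 2)]
    nlinarith [mul_self_le_mul_self ha.le key, hq2]
  · have hz : Real.sqrt (u 0) = 0 := by rw [← h0, Real.sqrt_zero]
    rw [hz]
    simpa using hu0 t

private lemma hess_upper (hM : 0 < M)
    (h3 : ∀ s, HasDerivAt u (w s) s) (hu0 : ∀ s, 0 ≤ u s)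
    (hsc : ∀ s, |w s| ≤ 2*M*(u s)^((3:ℝ)/2))
    {t : ℝ} (ht : 0 ≤ t) (hlt : M*t*Real.sqrt (u 0) < 1) :
    u t ≤ Real.sqrt (u 0)^2 / (1 - M*t*Real.sqrt (u 0))^2 := by
  rcases (hu0 0).lt_or_eq with h0 | h0
  · have hut : 0 < u t := u_pos hM h3 hu0 hsc h0 ht
    have hψ := (psi_bounds hM h3 hsc ht
      (fun s hs => u_pos hM h3 hu0 hsc h0 hs.1)).1
    have ha : 0 < Real.sqrt (u 0) := Real.sqrt_pos.2 h0
    have hq : 0 < Real.sqrt (u t) := Real.sqrt_pos.2 hut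
    have hq2 : Real.sqrt (u t)^2 = u t := Real.sq_sqrt (hu0 t)
    have hden : 0 < 1 - M*t*Real.sqrt (u 0) := by linarith
    have h1 : (1 - M*t*Real.sqrt (u 0))/Real.sqrt (u 0) ≤ (Real.sqrt (u t))⁻¹ := by
      have hrw : (1 - M*t*Real.sqrt (u 0))/Real.sqrt (u 0) = (Real.sqrt (u 0))⁻¹ - M*t := by
        field_simp
      rw [hrw]; exact hψ
    have key : Real.sqrt (u t) * (1 - M*t*Real.sqrt (u 0)) ≤ Real.sqrt (u 0) := by
      have h2 := mul_le_mul_of_nonneg_left h1 hq.le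
      rw [mul_inv_cancel₀ hq.ne'] at h2
      have h3' := mul_le_mul_of_nonneg_right h2 ha.le
      have h4 : Real.sqrt (u t) * ((1 - M*t*Real.sqrt (u 0))/Real.sqrt (u 0)) * Real.sqrt (u 0)
          = Real.sqrt (u t) * (1 - M*t*Real.sqrt (u 0)) := by
        field_simp
      rw [h4, one_mul] at h3'
      exact h3'
    rw [le_div_iff₀ (pow_pos hden 2)]
    nlinarith [mul_self_le_mul_self (mul_nonneg hq.le hden.le) key, hq2]
  · have hz : Real.sqrt (u 0) = 0 := by rw [← h0, Real.sqrt_zero]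
    rw [hz, u_zero hM h3 hu0 hsc h0.symm ht]
    norm_num

private lemma grad_lower (hM : 0 < M)
    (h2 : ∀ s, HasDerivAt φ1 (u s) s)
    (h3 : ∀ s, HasDerivAt u (w s) s) (hu0 : ∀ s, 0 ≤ u s)
    (hsc : ∀ s, |w s| ≤ 2*M*(u s)^((3:ℝ)/2))
    {t : ℝ} (ht : 0 ≤ t) :
    φ1 0 + t * Real.sqrt (u 0)^2 / (1 + M*t*Real.sqrt (u 0)) ≤ φ1 t := by
  have ha : 0 ≤ Real.sqrt (u 0) := Real.sqrt_nonneg _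
  have key := nonneg_of_deriv
    (g := fun s => φ1 s - φ1 0 - s * Real.sqrt (u 0)^2 / (1 + M*s*Real.sqrt (u 0)))
    (g' := fun s => u s - Real.sqrt (u 0)^2/(1 + M*s*Real.sqrt (u 0))^2) ht
    (fun s hs => by
      have hden : 0 < 1 + M*s*Real.sqrt (u 0) := by
        have := mul_nonneg (mul_nonneg hM.le hs.1) ha
        linarith
      have hnum : HasDerivAt (fun r : ℝ => r * Real.sqrt (u 0)^2) (1*Real.sqrt (u 0)^2) s :=
        (hasDerivAt_id s).mul_const _
      have hden' : HasDerivAt (fun r : ℝ => 1 + M*r*Real.sqrt (u 0)) (M*Real.sqrt (u 0)) s := by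
        simpa using (((hasDerivAt_id s).const_mul M).mul_const (Real.sqrt (u 0))).const_add 1
      have hx := hnum.div hden' (ne_of_gt hden)
      rw [show 1*Real.sqrt (u 0)^2*(1 + M*s*Real.sqrt (u 0))
          - s*Real.sqrt (u 0)^2*(M*Real.sqrt (u 0)) = Real.sqrt (u 0)^2 from by ring] at hx
      exact ((h2 s).sub_const (φ1 0)).sub hx)
    (by simp)
    (fun s hs => by
      have hh := hess_lower hM h3 hu0 hsc hs.1
      beta_reduce
      linarith)
  beta_reduce at key
  linarith

private lemma f_lower (hM : 0 < M)
    (h1 : ∀ s, HasDerivAt φ (φ1 s) s)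
    (h2 : ∀ s, HasDerivAt φ1 (u s) s)
    (h3 : ∀ s, HasDerivAt u (w s) s) (hu0 : ∀ s, 0 ≤ u s)
    (hsc : ∀ s, |w s| ≤ 2*M*(u s)^((3:ℝ)/2))
    {t : ℝ} (ht : 0 ≤ t) :
    φ 0 + t * φ1 0 + (M*t*Real.sqrt (u 0) - Real.log (1 + M*t*Real.sqrt (u 0)))/M^2 ≤ φ t := by
  have ha : 0 ≤ Real.sqrt (u 0) := Real.sqrt_nonneg _
  have key := nonneg_of_deriv
    (g := fun s => φ s - φ 0 - s * φ1 0
      - (M*s*Real.sqrt (u 0) - Real.log (1 + M*s*Real.sqrt (u 0)))/M^2)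
    (g' := fun s => φ1 s - φ1 0
      - (M*Real.sqrt (u 0) - M*Real.sqrt (u 0)/(1 + M*s*Real.sqrt (u 0)))/M^2) ht
    (fun s hs => by
      have hden : 0 < 1 + M*s*Real.sqrt (u 0) := by
        have := mul_nonneg (mul_nonneg hM.le hs.1) ha
        linarith
      have hlin : HasDerivAt (fun r : ℝ => M*r*Real.sqrt (u 0)) (M*Real.sqrt (u 0)) s := by
        simpa using ((hasDerivAt_id s).const_mul M).mul_const (Real.sqrt (u 0))
      have hden' : HasDerivAt (fun r : ℝ => 1 + M*r*Real.sqrt (u 0)) (M*Real.sqrt (u 0)) s := by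
        simpa using (((hasDerivAt_id s).const_mul M).mul_const (Real.sqrt (u 0))).const_add 1
      have hlog : HasDerivAt (fun r : ℝ => Real.log (1 + M*r*Real.sqrt (u 0)))
          (M*Real.sqrt (u 0)/(1 + M*s*Real.sqrt (u 0))) s := hden'.log (ne_of_gt hden)
      have hlin0 : HasDerivAt (fun r : ℝ => r * φ1 0) (φ1 0) s := by
        simpa using (hasDerivAt_id s).mul_const (φ1 0)
      exact (((h1 s).sub_const (φ 0)).sub hlin0).sub ((hlin.sub hlog).div_const (M^2)))
    (by simp)
    (fun s hs => by
      have hden : 0 < 1 + M*s*Real.sqrt (u 0) := by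
        have := mul_nonneg (mul_nonneg hM.le hs.1) ha
        linarith
      have hGL := grad_lower hM h2 h3 hu0 hsc hs.1
      have hiden : (M*Real.sqrt (u 0) - M*Real.sqrt (u 0)/(1 + M*s*Real.sqrt (u 0)))/M^2
          = s * Real.sqrt (u 0)^2 / (1 + M*s*Real.sqrt (u 0)) := by
        field_simp
        rw [one_sub_div (by rw [mul_right_comm]; exact hden.ne')]
        ring
      beta_reduce
      rw [hiden]
      linarith)
  beta_reduce at key
  linarith

private lemma grad_upper (hM : 0 < M)
    (h2 : ∀ s, HasDerivAt φ1 (u s) s)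
    (h3 : ∀ s, HasDerivAt u (w s) s) (hu0 : ∀ s, 0 ≤ u s)
    (hsc : ∀ s, |w s| ≤ 2*M*(u s)^((3:ℝ)/2))
    {t : ℝ} (ht : 0 ≤ t) (hlt : M*t*Real.sqrt (u 0) < 1) :
    φ1 t ≤ φ1 0 + t * Real.sqrt (u 0)^2 / (1 - M*t*Real.sqrt (u 0)) := by
  have ha : 0 ≤ Real.sqrt (u 0) := Real.sqrt_nonneg _
  have hsl : ∀ s ∈ Set.Icc (0:ℝ) t, M*s*Real.sqrt (u 0) ≤ M*t*Real.sqrt (u 0) := by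
    intro s hs
    have h := mul_nonneg (mul_nonneg hM.le (sub_nonneg.2 hs.2)) ha
    nlinarith
  have key := nonneg_of_deriv
    (g := fun s => s * Real.sqrt (u 0)^2 / (1 - M*s*Real.sqrt (u 0)) - (φ1 s - φ1 0))
    (g' := fun s => Real.sqrt (u 0)^2/(1 - M*s*Real.sqrt (u 0))^2 - u s) ht
    (fun s hs => by
      have hden : 0 < 1 - M*s*Real.sqrt (u 0) := by
        have := hsl s hs
        linarith
      have hnum : HasDerivAt (fun r : ℝ => r * Real.sqrt (u 0)^2) (1*Real.sqrt (u 0)^2) s :=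
        (hasDerivAt_id s).mul_const _
      have hden' : HasDerivAt (fun r : ℝ => 1 - M*r*Real.sqrt (u 0)) (-(M*Real.sqrt (u 0))) s := by
        have h := (((hasDerivAt_id s).const_mul M).mul_const (Real.sqrt (u 0))).const_sub 1
        simp only [id, mul_one] at h
        exact h
      have hx := hnum.div hden' (ne_of_gt hden)
      rw [show 1*Real.sqrt (u 0)^2*(1 - M*s*Real.sqrt (u 0))
          - s*Real.sqrt (u 0)^2*(-(M*Real.sqrt (u 0))) = Real.sqrt (u 0)^2 from by ring] at hx
      exact hx.sub ((h2 s).sub_const (φ1 0)))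
    (by simp)
    (fun s hs => by
      have hlt' : M*s*Real.sqrt (u 0) < 1 := lt_of_le_of_lt (hsl s hs) hlt
      have hh := hess_upper hM h3 hu0 hsc hs.1 hlt'
      beta_reduce
      linarith)
  beta_reduce at key
  linarith

private lemma f_upper (hM : 0 < M)
    (h1 : ∀ s, HasDerivAt φ (φ1 s) s)
    (h2 : ∀ s, HasDerivAt φ1 (u s) s)
    (h3 : ∀ s, HasDerivAt u (w s) s) (hu0 : ∀ s, 0 ≤ u s)
    (hsc : ∀ s, |w s| ≤ 2*M*(u s)^((3:ℝ)/2))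
    {t : ℝ} (ht : 0 ≤ t) (hlt : M*t*Real.sqrt (u 0) < 1) :
    φ t ≤ φ 0 + t * φ1 0
      + (-(M*t*Real.sqrt (u 0)) - Real.log (1 - M*t*Real.sqrt (u 0)))/M^2 := by
  have ha : 0 ≤ Real.sqrt (u 0) := Real.sqrt_nonneg _
  have hsl : ∀ s ∈ Set.Icc (0:ℝ) t, M*s*Real.sqrt (u 0) ≤ M*t*Real.sqrt (u 0) := by
    intro s hs
    have h := mul_nonneg (mul_nonneg hM.le (sub_nonneg.2 hs.2)) ha
    nlinarith
  have key := nonneg_of_deriv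
    (g := fun s => φ 0 + s * φ1 0
      + (-(M*s*Real.sqrt (u 0)) - Real.log (1 - M*s*Real.sqrt (u 0)))/M^2 - φ s)
    (g' := fun s => φ1 0
      + (-(M*Real.sqrt (u 0)) - (-(M*Real.sqrt (u 0)))/(1 - M*s*Real.sqrt (u 0)))/M^2 - φ1 s) ht
    (fun s hs => by
      have hden : 0 < 1 - M*s*Real.sqrt (u 0) := by
        have := hsl s hs
        linarith
      have hlin : HasDerivAt (fun r : ℝ => -(M*r*Real.sqrt (u 0))) (-(M*Real.sqrt (u 0))) s := by
        have h := (((hasDerivAt_id s).const_mul M).mul_const (Real.sqrt (u 0))).fun_neg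
        simp only [id, mul_one] at h
        exact h
      have hden' : HasDerivAt (fun r : ℝ => 1 - M*r*Real.sqrt (u 0)) (-(M*Real.sqrt (u 0))) s := by
        have h := (((hasDerivAt_id s).const_mul M).mul_const (Real.sqrt (u 0))).const_sub 1
        simp only [id, mul_one] at h
        exact h
      have hlog : HasDerivAt (fun r : ℝ => Real.log (1 - M*r*Real.sqrt (u 0)))
          ((-(M*Real.sqrt (u 0)))/(1 - M*s*Real.sqrt (u 0))) s := hden'.log (ne_of_gt hden)
      have hlin0 : HasDerivAt (fun r : ℝ => r * φ1 0) (φ1 0) s := by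
        simpa using (hasDerivAt_id s).mul_const (φ1 0)
      have hD := (((hasDerivAt_const s (φ 0)).add hlin0).add
        ((hlin.sub hlog).div_const (M^2))).sub (h1 s)
      simp only [zero_add] at hD
      exact hD)
    (by simp)
    (fun s hs => by
      have hden : 0 < 1 - M*s*Real.sqrt (u 0) := by
        have := hsl s hs
        linarith
      have hGU := grad_upper hM h2 h3 hu0 hsc hs.1 (lt_of_le_of_lt (hsl s hs) hlt)
      have hiden : (-(M*Real.sqrt (u 0)) - (-(M*Real.sqrt (u 0)))/(1 - M*s*Real.sqrt (u 0)))/M^2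
          = s * Real.sqrt (u 0)^2 / (1 - M*s*Real.sqrt (u 0)) := by
        field_simp
        have hne : 1 - M * Real.sqrt (u 0) * s ≠ 0 := by rw [mul_right_comm]; exact hden.ne'
        rw [eq_div_iff hne, mul_assoc, one_div, sub_mul, neg_mul, neg_mul, inv_mul_cancel₀ hne]
        ring
      beta_reduce
      rw [hiden]
      linarith)
  beta_reduce at key
  have hg0 : φ 0 + 0 * φ1 0
      + (-(M*0*Real.sqrt (u 0)) - Real.log (1 - M*0*Real.sqrt (u 0)))/M^2 - φ 0 = 0 := by
    simp
  linarith

end OneD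

section Chain

private lemma chain_c {n : ℕ} (x d : V n) (s : ℝ) :
    HasDerivAt (fun r : ℝ => x + r • d) d s := by
  simpa using ((hasDerivAt_id s).smul_const d).const_add x

private lemma chain1 {n : ℕ} {f : V n → ℝ} (hf : ContDiff ℝ 3 f) (x d : V n) (s : ℝ) :
    HasDerivAt (fun r : ℝ => f (x + r • d)) (fderiv ℝ f (x + s • d) d) s :=
  (((hf.differentiable (by norm_num)) (x + s • d)).hasFDerivAt).comp_hasDerivAt s (chain_c x d s)

private lemma fin_tail3 {n : ℕ} (d : V n) : Fin.tail ![d, d, d] = ![d, d] := by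
  funext i; fin_cases i <;> rfl

private lemma chain2 {n : ℕ} {f : V n → ℝ} (hf : ContDiff ℝ 3 f) (x d : V n) (s : ℝ) :
    HasDerivAt (fun r : ℝ => fderiv ℝ f (x + r • d) d) (hessQ f (x + s • d) d) s := by
  have hF1 : ContDiff ℝ 2 (fderiv ℝ f) := hf.fderiv_right (by norm_num)
  have hd1 : HasFDerivAt (fderiv ℝ f) (fderiv ℝ (fderiv ℝ f) (x + s • d)) (x + s • d) :=
    ((hF1.differentiable (by norm_num)) (x + s • d)).hasFDerivAt
  have hcomp := (((ContinuousLinearMap.apply ℝ ℝ d).hasFDerivAt).comp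
    (x + s • d) hd1).comp_hasDerivAt s (chain_c x d s)
  have heq : hessQ f (x + s • d) d
      = ((ContinuousLinearMap.apply ℝ ℝ d).comp (fderiv ℝ (fderiv ℝ f) (x + s • d))) d := by
    simp [hessQ, iteratedFDeriv_two_apply]
  rw [heq]
  exact hcomp

private lemma chain3 {n : ℕ} {f : V n → ℝ} (hf : ContDiff ℝ 3 f) (x d : V n) (s : ℝ) :
    HasDerivAt (fun r : ℝ => hessQ f (x + r • d) d)
      (iteratedFDeriv ℝ 3 f (x + s • d) ![d, d, d]) s := by
  have hF2 : Differentiable ℝ (iteratedFDeriv ℝ 2 f) :=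
    hf.differentiable_iteratedFDeriv (by norm_num)
  have hd2 := (hF2 (x + s • d)).hasFDerivAt
  have hcomp := (((ContinuousMultilinearMap.apply ℝ (fun _ : Fin 2 => V n) ℝ
    ![d, d]).hasFDerivAt).comp (x + s • d) hd2).comp_hasDerivAt s (chain_c x d s)
  have heq : iteratedFDeriv ℝ 3 f (x + s • d) ![d, d, d]
      = ((ContinuousMultilinearMap.apply ℝ (fun _ : Fin 2 => V n) ℝ ![d, d]).comp
          (fderiv ℝ (iteratedFDeriv ℝ 2 f) (x + s • d))) d := by
    have h := iteratedFDeriv_succ_apply_left (𝕜 := ℝ) (f := f) (x := x + s • d)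
      (n := 2) ![d, d, d]
    rw [h, fin_tail3]
    simp
  rw [heq]
  exact hcomp

private lemma u_nonneg {n : ℕ} {f : V n → ℝ} (hf : ContDiff ℝ 3 f)
    (hconv : ConvexOn ℝ Set.univ f) (x d : V n) (s : ℝ) :
    0 ≤ hessQ f (x + s • d) d := by
  have hφ : ConvexOn ℝ Set.univ (fun r : ℝ => f (x + r • d)) := by
    have h := hconv.comp_affineMap (AffineMap.lineMap x (x + d) : ℝ →ᵃ[ℝ] V n)
    have heq : (f ∘ (AffineMap.lineMap x (x + d) : ℝ →ᵃ[ℝ] V n)) = fun r : ℝ => f (x + r • d) := by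
      funext r
      simp only [Function.comp_apply, AffineMap.lineMap_apply, vsub_eq_sub, vadd_eq_add]
      congr 1
      rw [add_sub_cancel_left]
      exact add_comm _ _
    rw [heq] at h
    simpa using h
  have hmono : MonotoneOn (deriv fun r : ℝ => f (x + r • d)) Set.univ :=
    hφ.monotoneOn_deriv (fun r _ => (chain1 hf x d r).differentiableAt)
  have hd : ∀ r : ℝ, deriv (fun r : ℝ => f (x + r • d)) r = fderiv ℝ f (x + r • d) d :=
    fun r => (chain1 hf x d r).deriv
  have hslope : Filter.Tendsto (slope (fun r : ℝ => fderiv ℝ f (x + r • d) d) s)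
      (nhdsWithin s (Set.Ioi s)) (nhds (hessQ f (x + s • d) d)) := by
    have h := (chain2 hf x d s).hasDerivWithinAt (s := Set.Ioi s)
    rwa [hasDerivWithinAt_iff_tendsto_slope' (by simp : s ∉ Set.Ioi s)] at h
  refine ge_of_tendsto hslope ?_
  refine Filter.eventually_of_mem self_mem_nhdsWithin (fun r hr => ?_)
  rw [slope_def_field]
  apply div_nonneg
  · have h := hmono (Set.mem_univ s) (Set.mem_univ r) (le_of_lt hr)
    rw [hd s, hd r] at h
    linarith
  · have h : s < r := hr
    linarith

private lemma dot_gradient {n : ℕ} (f : V n → ℝ) (y v : V n) :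
    dot (gradient f y) v = fderiv ℝ f y v := by
  have h1 : dot (gradient f y) v = @inner ℝ _ _ (gradient f y) v := by
    simp only [dot, PiLp.inner_apply, RCLike.inner_apply, conj_trivial]
    exact Finset.sum_congr rfl (fun i _ => mul_comm _ _)
  rw [h1]
  simp only [gradient]
  exact InnerProductSpace.toDual_symm_apply

end Chain
end AuxSC

theorem stmt0 {n : ℕ} (f : V n → ℝ) (M : ℝ) (hM : 0 < M)
    (hf : ContDiff ℝ 3 f) (hconv : ConvexOn ℝ Set.univ f)
    (hself : SelfConcordant M f) :
    ∀ (x d : V n) (t : ℝ), 0 ≤ t →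
      (dot (gradient f (x + t • d)) d ≥
        dot (gradient f x) d + t * wnorm f x d ^ 2 / (1 + M * t * wnorm f x d)) ∧
      (f (x + t • d) ≥
        f x + t * dot (gradient f x) d + omegaFn (M * t * wnorm f x d) / M ^ 2) ∧
      (M * t * wnorm f x d < 1 →
        (dot (gradient f (x + t • d)) d ≤
          dot (gradient f x) d + t * wnorm f x d ^ 2 / (1 - M * t * wnorm f x d)) ∧
        (f (x + t • d) ≤
          f x + t * dot (gradient f x) d + omegaStar (M * t * wnorm f x d) / M ^ 2)) := by
  intro x d t ht
  have hx0 : x + (0:ℝ) • d = x := by simp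
  have h1 := chain1 hf x d
  have h2 := chain2 hf x d
  have h3 := chain3 hf x d
  have hu0 : ∀ s : ℝ, 0 ≤ hessQ f (x + s • d) d := u_nonneg hf hconv x d
  have hsc : ∀ s : ℝ, |iteratedFDeriv ℝ 3 f (x + s • d) ![d, d, d]|
      ≤ 2*M*(hessQ f (x + s • d) d)^((3:ℝ)/2) := fun s => hself _ d
  have hGL := grad_lower (u := fun s : ℝ => hessQ f (x + s • d) d)
    (φ1 := fun s : ℝ => fderiv ℝ f (x + s • d) d) hM h2 h3 hu0 hsc ht
  have hFL := f_lower (φ := fun s : ℝ => f (x + s • d))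
    (φ1 := fun s : ℝ => fderiv ℝ f (x + s • d) d)
    (u := fun s : ℝ => hessQ f (x + s • d) d) hM h1 h2 h3 hu0 hsc ht
  simp only [hx0] at hGL hFL
  refine ⟨?_, ?_, ?_⟩
  · rw [ge_iff_le, dot_gradient, dot_gradient]
    simp only [wnorm]
    exact hGL
  · rw [ge_iff_le, dot_gradient]
    simp only [wnorm, omegaFn]
    exact hFL
  · intro hlt
    have hlt' : M * t * Real.sqrt (hessQ f (x + (0:ℝ) • d) d) < 1 := by
      rw [hx0]
      simpa [wnorm] using hlt
    have hGU := grad_upper (u := fun s : ℝ => hessQ f (x + s • d) d)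
      (φ1 := fun s : ℝ => fderiv ℝ f (x + s • d) d) hM h2 h3 hu0 hsc ht hlt'
    have hFU := f_upper (φ := fun s : ℝ => f (x + s • d))
      (φ1 := fun s : ℝ => fderiv ℝ f (x + s • d) d)
      (u := fun s : ℝ => hessQ f (x + s • d) d) hM h1 h2 h3 hu0 hsc ht hlt'
    simp only [hx0] at hGU hFU
    constructor
    · rw [dot_gradient, dot_gradient]
      simp only [wnorm]
      exact hGU
    · rw [dot_gradient]
      simp only [wnorm, omegaStar]
      exact hFU
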